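/- arXiv:1912.08448 — 2 statements merged into one kernel-verified Lean document; each statement's English description precedes it below -/
import Mathlib

section
/- Let A and B be abelian groups, f : A → B, and m ∈ ℕ₀. Then fdeg(f) ≤ m if and only if for every k > m and all x_1, …, x_k ∈ A, f(∑_{i=1}^k x_i) = ∑_{S ⊊ {1,…,k}} (−1)^{k−|S|+1} f(∑_{j∈S} x_j). -/
open scoped BigOperators

/-- Action of the integral group ring `ℤ[A]` on functions `A → B`:
`(τ_a * f)(x) = f(x + a)`, extended linearly. -/
noncomputable def groupRingAct {A B : Type*} [AddCommGroup A] [AddCommGroup B]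
    (r : AddMonoidAlgebra ℤ A) (f : A → B) : A → B :=
  fun x => r.coeff.sum fun a z => z • f (x + a)

/-- The augmentation ideal of the group ring `R[A]`. -/
noncomputable def augIdealR (R : Type*) (A : Type*) [CommRing R] [AddCommGroup A] :
    Ideal (AddMonoidAlgebra R A) :=
  Ideal.span {r : AddMonoidAlgebra R A | ∃ a : A, r = AddMonoidAlgebra.single a 1 - 1}

/-- The augmentation ideal of `ℤ[A]`. -/
noncomputable def augIdeal (A : Type*) [AddCommGroup A] : Ideal (AddMonoidAlgebra ℤ A) :=
  augIdealR ℤ A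

/-- The functional degree of `f : A → B`: the least `n` with `I^(n+1) * f = 0`,
where `I` is the augmentation ideal of `ℤ[A]`; `⊤` if there is no such `n`. -/
noncomputable def fdeg {A B : Type*} [AddCommGroup A] [AddCommGroup B] (f : A → B) : ℕ∞ :=
  sInf {N : ℕ∞ | ∃ n : ℕ, N = (n : ℕ∞) ∧
    ∀ r ∈ augIdeal A ^ (n + 1), groupRingAct r f = 0}

section Aux
variable {A B : Type*} [AddCommGroup A] [AddCommGroup B]

lemma act_zero_r (r : AddMonoidAlgebra ℤ A) : groupRingAct r (0 : A → B) = 0 := by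
  funext x; simp [groupRingAct, Finsupp.sum]

lemma act_zero (f : A → B) : groupRingAct (0 : AddMonoidAlgebra ℤ A) f = 0 := by
  funext x; simp [groupRingAct]

lemma act_single (a : A) (z : ℤ) (f : A → B) :
    groupRingAct (AddMonoidAlgebra.single a z) f = fun x => z • f (x + a) := by
  funext x
  simp only [groupRingAct]
  exact Finsupp.sum_single_index (by simp)

lemma act_add_left (r s : AddMonoidAlgebra ℤ A) (f : A → B) :
    groupRingAct (r + s) f = groupRingAct r f + groupRingAct s f := by
  funext x
  simp only [groupRingAct, Pi.add_apply]
  classical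
  exact Finsupp.sum_add_index (by simp) (by intros; rw [add_smul])

lemma act_add_right (r : AddMonoidAlgebra ℤ A) (f g : A → B) :
    groupRingAct r (f + g) = groupRingAct r f + groupRingAct r g := by
  funext x
  simp only [groupRingAct, Pi.add_apply, Finsupp.sum, smul_add, Finset.sum_add_distrib]

lemma act_sum {ι : Type*} (s : Finset ι) (r : ι → AddMonoidAlgebra ℤ A) (f : A → B) :
    groupRingAct (∑ i ∈ s, r i) f = ∑ i ∈ s, groupRingAct (r i) f := by
  induction s using Finset.cons_induction with
  | empty => simp [act_zero]
  | cons a s ha ih => rw [Finset.sum_cons, Finset.sum_cons, act_add_left, ih]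

lemma act_mul (r s : AddMonoidAlgebra ℤ A) (f : A → B) :
    groupRingAct (r * s) f = groupRingAct r (groupRingAct s f) := by
  induction r using AddMonoidAlgebra.induction_linear with
  | zero => rw [zero_mul, act_zero, act_zero]
  | add r1 r2 h1 h2 => rw [add_mul, act_add_left, act_add_left, h1, h2]
  | single a z =>
    induction s using AddMonoidAlgebra.induction_linear with
    | zero =>
      rw [mul_zero, act_zero, act_zero_r]
    | add s1 s2 h1 h2 =>
      rw [mul_add, act_add_left, h1, h2, act_add_left s1 s2, act_add_right]
    | single b w =>
      show groupRingAct (AddMonoidAlgebra.single a z * AddMonoidAlgebra.single b w) f = _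
      rw [AddMonoidAlgebra.single_mul_single, act_single, act_single, act_single]
      funext x
      simp [mul_smul, add_assoc]

lemma act_one (f : A → B) : groupRingAct (1 : AddMonoidAlgebra ℤ A) f = f := by
  have : (1 : AddMonoidAlgebra ℤ A) = AddMonoidAlgebra.single 0 1 := rfl
  rw [this, act_single]
  funext x; simp

lemma prod_mem_pow {R : Type*} [CommRing R] (I : Ideal R) {n : ℕ} (g : Fin n → R)
    (hg : ∀ i, g i ∈ I) : (∏ i, g i) ∈ I ^ n := by
  induction n with
  | zero => simp
  | succ n ih =>
    rw [Fin.prod_univ_castSucc, pow_succ]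
    exact Ideal.mul_mem_mul (ih _ (fun i => hg _)) (hg _)

/-- key induction -/
lemma act_pow_zero (n : ℕ) (f : A → B)
    (h : ∀ x : Fin n → A,
      groupRingAct (∏ i, (AddMonoidAlgebra.single (x i) 1 - 1)) f = 0) :
    ∀ r ∈ augIdeal A ^ n, groupRingAct r f = 0 := by
  induction n generalizing f with
  | zero =>
    have hf : f = 0 := by
      have h0 := h (fun i => 0)
      rw [Finset.univ_eq_empty, Finset.prod_empty, act_one] at h0
      exact h0
    intro r _
    rw [hf, act_zero_r]
  | succ n ih =>
    intro r hr
    rw [pow_succ] at hr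
    refine Submodule.mul_induction_on hr ?_ ?_
    · intro a ha b hb
      rw [act_mul]
      refine ih (groupRingAct b f) ?_ a ha
      intro x
      rw [← act_mul]
      -- prove by span induction on b
      have key : ∀ c ∈ augIdeal A,
          groupRingAct ((∏ i, (AddMonoidAlgebra.single (x i) 1 - 1)) * c) f = 0 := by
        intro c hc
        refine Submodule.span_induction ?_ ?_ ?_ ?_ hc
        · rintro _ ⟨a', rfl⟩
          have hp : (∏ i, (AddMonoidAlgebra.single (x i) 1 - 1)) *
              (AddMonoidAlgebra.single a' 1 - 1)
              = ∏ i : Fin (n+1),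
                  ((AddMonoidAlgebra.single ((Fin.snoc x a' : Fin (n+1) → A) i) 1 : AddMonoidAlgebra ℤ A) - 1) := by
            rw [Fin.prod_univ_castSucc]
            simp [Fin.snoc_castSucc, Fin.snoc_last]
          rw [hp]
          exact h (Fin.snoc x a')
        · rw [mul_zero, act_zero]
        · intro u v hu hv huu hvv
          rw [mul_add, act_add_left, huu, hvv, add_zero]
        · intro c u hu huu
          rw [smul_eq_mul, mul_left_comm, act_mul, huu, act_zero_r]
      exact key b hb
    · intro u v hu hv
      rw [act_add_left, hu, hv, add_zero]


lemma act_prod_zero (k : ℕ) (x : Fin k → A) (f : A → B) :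
    groupRingAct (∏ i, ((AddMonoidAlgebra.single (x i) 1 : AddMonoidAlgebra ℤ A) - 1)) f 0
      = ∑ S ∈ (Finset.univ : Finset (Fin k)).powerset,
          ((-1 : ℤ) ^ (k - S.card)) • f (∑ j ∈ S, x j) := by
  classical
  have hneg : (-1 : AddMonoidAlgebra ℤ A) = AddMonoidAlgebra.single 0 (-1) := by
    have h1 : (1 : AddMonoidAlgebra ℤ A) = AddMonoidAlgebra.single 0 1 := rfl
    rw [h1]
    exact (AddMonoidAlgebra.single_neg 0 1).symm
  have expand : (∏ i, ((AddMonoidAlgebra.single (x i) 1 : AddMonoidAlgebra ℤ A) - 1))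
      = ∑ S ∈ (Finset.univ : Finset (Fin k)).powerset,
          AddMonoidAlgebra.single (∑ j ∈ S, x j) ((-1:ℤ)^(k - S.card)) := by
    have hrw : ∀ i : Fin k, ((AddMonoidAlgebra.single (x i) 1 : AddMonoidAlgebra ℤ A) - 1)
        = AddMonoidAlgebra.single (x i) 1 + (-1) := by intro i; ring
    rw [Finset.prod_congr rfl (fun i _ => hrw i), Finset.prod_add]
    refine Finset.sum_congr rfl ?_
    intro S hS
    rw [AddMonoidAlgebra.prod_single, Finset.prod_const, Finset.prod_const, hneg,
      AddMonoidAlgebra.single_pow, AddMonoidAlgebra.single_mul_single]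
    have hcard : (Finset.univ \ S).card = k - S.card := by
      rw [Finset.card_sdiff_of_subset (Finset.subset_univ S)]
      simp
    simp [hcard]
  rw [expand, act_sum]
  simp only [Finset.sum_apply]
  refine Finset.sum_congr rfl ?_
  intro S hS
  rw [act_single]
  simp

lemma formula_iff (k : ℕ) (x : Fin k → A) (f : A → B) :
    (f (∑ i : Fin k, x i) =
      ∑ S ∈ Finset.univ.powerset.filter (fun S : Finset (Fin k) => S ≠ Finset.univ),
        ((-1 : ℤ) ^ (k - S.card + 1)) • f (∑ j ∈ S, x j))
    ↔ groupRingAct (∏ i, ((AddMonoidAlgebra.single (x i) 1 : AddMonoidAlgebra ℤ A) - 1)) f 0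
        = 0 := by
  classical
  rw [act_prod_zero]
  have huniv : (Finset.univ : Finset (Fin k)) ∈ (Finset.univ : Finset (Fin k)).powerset := by
    simp
  rw [← Finset.add_sum_erase _ _ huniv, ← Finset.filter_ne']
  have hself : ((-1 : ℤ) ^ (k - (Finset.univ : Finset (Fin k)).card)) •
      f (∑ j ∈ (Finset.univ : Finset (Fin k)), x j) = f (∑ i : Fin k, x i) := by
    simp [Finset.card_univ]
  rw [hself]
  have hsum : ∑ S ∈ Finset.univ.powerset.filter (fun S : Finset (Fin k) => S ≠ Finset.univ),
      ((-1 : ℤ) ^ (k - S.card + 1)) • f (∑ j ∈ S, x j)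
      = - ∑ S ∈ Finset.univ.powerset.filter (fun S : Finset (Fin k) => S ≠ Finset.univ),
      ((-1 : ℤ) ^ (k - S.card)) • f (∑ j ∈ S, x j) := by
    rw [← Finset.sum_neg_distrib]
    refine Finset.sum_congr rfl ?_
    intro S _
    rw [pow_succ, mul_neg_one, neg_smul]
  rw [hsum, eq_neg_iff_add_eq_zero]

lemma act_prod_fun_zero (m : ℕ) (f : A → B)
    (Q : ∀ k, k > m → ∀ x : Fin k → A,
      groupRingAct (∏ i, ((AddMonoidAlgebra.single (x i) 1 : AddMonoidAlgebra ℤ A) - 1)) f 0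
        = 0)
    {k : ℕ} (hk : k > m) (x : Fin k → A) :
    groupRingAct (∏ i, ((AddMonoidAlgebra.single (x i) 1 : AddMonoidAlgebra ℤ A) - 1)) f
      = 0 := by
  classical
  funext y
  set P := ∏ i, ((AddMonoidAlgebra.single (x i) 1 : AddMonoidAlgebra ℤ A) - 1) with hP
  have h1 : groupRingAct ((AddMonoidAlgebra.single y 1) * P) f 0 = groupRingAct P f y := by
    rw [act_mul, act_single]
    simp
  have h2 : (AddMonoidAlgebra.single y 1 : AddMonoidAlgebra ℤ A) * P
      = ((AddMonoidAlgebra.single y 1 : AddMonoidAlgebra ℤ A) - 1) * P + P := by ring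
  have h3 : ((AddMonoidAlgebra.single y 1 : AddMonoidAlgebra ℤ A) - 1) * P
      = ∏ i : Fin (k+1),
        ((AddMonoidAlgebra.single ((Fin.cons y x : Fin (k+1) → A) i) 1 :
          AddMonoidAlgebra ℤ A) - 1) := by
    rw [Fin.prod_univ_succ]
    simp [hP]
  have h4 := Q (k+1) (Nat.lt_succ_of_lt hk) (Fin.cons y x)
  have h5 := Q k hk x
  rw [← h1, h2, act_add_left, h3]
  show groupRingAct _ f 0 + groupRingAct P f 0 = 0
  rw [h4]
  simpa using h5

lemma fdeg_le_iff_ann (f : A → B) (m : ℕ) :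
    fdeg f ≤ (m : ℕ∞) ↔ ∀ r ∈ augIdeal A ^ (m + 1), groupRingAct r f = 0 := by
  constructor
  · intro hle
    by_contra hc
    have hgt : (m : ℕ∞) + 1 ≤ fdeg f := by
      refine le_sInf ?_
      rintro N ⟨n, rfl, hn⟩
      rw [ENat.add_one_le_iff (by simp)]
      by_contra hlt
      push_neg at hlt
      have hnm : n ≤ m := by exact_mod_cast hlt
      exact hc (fun r hr => hn r (Ideal.pow_le_pow_right (by omega) hr))
    have : (m : ℕ∞) < (m : ℕ∞) := lt_of_lt_of_le (by
      have : (m : ℕ∞) < (m : ℕ∞) + 1 := by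
        rw [← ENat.add_one_le_iff (by simp)]
      exact this) (le_trans hgt hle)
    exact lt_irrefl _ this
  · intro h
    exact sInf_le ⟨m, rfl, h⟩

end Aux

theorem fdeg_le_iff_sum_formula {A B : Type*} [AddCommGroup A] [AddCommGroup B]
    (f : A → B) (m : ℕ) :
    fdeg f ≤ (m : ℕ∞) ↔
      ∀ k : ℕ, k > m → ∀ x : Fin k → A,
        f (∑ i : Fin k, x i) =
          ∑ S ∈ Finset.univ.powerset.filter (fun S : Finset (Fin k) => S ≠ Finset.univ),
            ((-1 : ℤ) ^ (k - S.card + 1)) • f (∑ j ∈ S, x j) := by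
  classical
  rw [fdeg_le_iff_ann]
  constructor
  · intro h k hk x
    rw [formula_iff]
    have hmem : (∏ i, ((AddMonoidAlgebra.single (x i) 1 : AddMonoidAlgebra ℤ A) - 1))
        ∈ augIdeal A ^ (m + 1) := by
      have h1 : (∏ i, ((AddMonoidAlgebra.single (x i) 1 : AddMonoidAlgebra ℤ A) - 1))
          ∈ augIdeal A ^ k :=
        prod_mem_pow (augIdeal A) _ (fun i => Ideal.subset_span ⟨x i, rfl⟩)
      exact Ideal.pow_le_pow_right (by omega) h1
    exact congrFun (h _ hmem) 0
  · intro h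
    refine act_pow_zero (m + 1) f ?_
    intro x
    exact act_prod_fun_zero m f
      (fun k hk x => (formula_iff k x f).mp (h k hk x)) (Nat.lt_succ_self m) x
end

section
/- Let A and B be periodic (torsion) abelian groups, both nontrivial. If sup{fdeg(f) : f : A → B} is finite, then there is a prime p such that both A and B are p-groups. -/
open scoped BigOperators

section
open Finset
section Aux
variable {A B : Type*} [AddCommGroup A] [AddCommGroup B]

lemma groupRingAct_single (a : A) (z : ℤ) (f : A → B) (x : A) :
    groupRingAct (AddMonoidAlgebra.single a z) f x = z • f (x + a) := by
  unfold groupRingAct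
  rw [AddMonoidAlgebra.coeff_single, Finsupp.sum_single_index]
  simp

lemma groupRingAct_add (r s : AddMonoidAlgebra ℤ A) (f : A → B) (x : A) :
    groupRingAct (r + s) f x = groupRingAct r f x + groupRingAct s f x := by
  unfold groupRingAct
  rw [AddMonoidAlgebra.coeff_add]
  exact Finsupp.sum_add_index' (fun a => by simp) (fun a z1 z2 => by rw [add_smul])

lemma groupRingAct_sum {ι : Type*} (s : Finset ι) (g : ι → AddMonoidAlgebra ℤ A)
    (f : A → B) (x : A) :
    groupRingAct (∑ i ∈ s, g i) f x = ∑ i ∈ s, groupRingAct (g i) f x := by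
  classical
  induction s using Finset.cons_induction with
  | empty => simp [groupRingAct]
  | cons i s hi ih => rw [Finset.sum_cons, groupRingAct_add, ih, Finset.sum_cons]

lemma single_sub_one_pow (a : A) (m : ℕ) :
    (AddMonoidAlgebra.single a (1:ℤ) - 1) ^ m
      = ∑ k ∈ Finset.range (m+1),
          AddMonoidAlgebra.single (k • a) ((-1)^(m-k) * (m.choose k : ℤ)) := by
  rw [sub_eq_add_neg, add_pow]
  refine Finset.sum_congr rfl fun k hk => ?_
  have h1 : ((-1 : AddMonoidAlgebra ℤ A)) = AddMonoidAlgebra.single (0:A) (-1 : ℤ) := by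
    rw [AddMonoidAlgebra.one_def]
    exact (AddMonoidAlgebra.single_neg 0 1).symm
  rw [AddMonoidAlgebra.single_pow, one_pow, h1, AddMonoidAlgebra.single_pow,
      AddMonoidAlgebra.natCast_def, AddMonoidAlgebra.single_mul_single,
      AddMonoidAlgebra.single_mul_single]
  simp

lemma pow_mem_aug (a : A) (m : ℕ) :
    (AddMonoidAlgebra.single a (1:ℤ) - 1) ^ m ∈ augIdeal A ^ m := by
  apply Ideal.pow_mem_pow
  apply Ideal.subset_span
  exact ⟨a, rfl⟩

end Aux

section NatAux
variable {A : Type*} [AddCommGroup A]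

lemma nsmul_inj_of_lt {a : A} {p : ℕ} (ha : addOrderOf a = p) {i j : ℕ}
    (hi : i < p) (hj : j < p) (h : i • a = j • a) : i = j := by
  wlog hle : i ≤ j generalizing i j
  · exact (this hj hi h.symm (le_of_not_ge hle)).symm
  have h2 : (j - i) • a = 0 := by
    have h3 : (j - i) • a + i • a = j • a := by
      rw [← add_nsmul, Nat.sub_add_cancel hle]
    rw [← h] at h3
    exact add_right_cancel (h3.trans (zero_add (i • a)).symm)
  have hdvd : p ∣ j - i := ha ▸ addOrderOf_dvd_of_nsmul_eq_zero h2
  have : j - i = 0 := Nat.eq_zero_of_dvd_of_lt hdvd (by omega) |>.symm ▸ rfl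
  omega

lemma nsmul_eq_iff_mod {a : A} {p : ℕ} (ha : addOrderOf a = p) (hp : 0 < p)
    {j : ℕ} (hj : j < p) (k : ℕ) : k • a = j • a ↔ k % p = j := by
  constructor
  · intro h
    have hk : (k % p) • a = j • a := by
      rw [← h, ← ha]
      exact mod_addOrderOf_nsmul a k
    exact nsmul_inj_of_lt ha (Nat.mod_lt _ hp) hj hk
  · intro h
    rw [← h, ← ha]
    exact (mod_addOrderOf_nsmul a k).symm
end NatAux

-- root of unity existence
lemma exists_nontrivial_root (K : Type*) [Field K] [IsAlgClosed K] {p q : ℕ}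
    (hp : p.Prime) (hq : q.Prime) (hpq : p ≠ q) [CharP K q] :
    ∃ ζ : K, ζ ^ p = 1 ∧ ζ ≠ 1 := by
  classical
  set P : Polynomial K := ∑ i ∈ Finset.range p, Polynomial.X ^ i with hP
  have hcoeff : P.coeff 1 = 1 := by
    rw [hP, Polynomial.finset_sum_coeff]
    simp only [Polynomial.coeff_X_pow]
    rw [Finset.sum_ite_eq]
    simp [hp.one_lt]
  have hd : P.degree ≠ 0 := by
    intro h
    have : P.coeff 1 = 0 := Polynomial.coeff_eq_zero_of_degree_lt (by rw [h]; norm_num)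
    rw [hcoeff] at this
    exact one_ne_zero this
  obtain ⟨ζ, hζ⟩ := IsAlgClosed.exists_root P hd
  have heval : ∑ i ∈ Finset.range p, ζ ^ i = 0 := by
    have := hζ
    rw [Polynomial.IsRoot, hP, Polynomial.eval_finset_sum] at this
    simpa using this
  have hpK : (p : K) ≠ 0 := by
    rw [Ne, CharP.cast_eq_zero_iff K q p]
    intro hdvd
    exact hpq ((Nat.prime_dvd_prime_iff_eq hq hp).mp hdvd).symm
  have hζ1 : ζ ≠ 1 := by
    intro h
    rw [h] at heval
    simp [Finset.sum_const, Finset.card_range] at heval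
    exact hpK heval
  have hζp : ζ ^ p = 1 := by
    have := geom_sum_mul ζ p
    rw [heval, zero_mul] at this
    have h0 : ζ ^ p - 1 = 0 := this.symm
    linear_combination h0
  exact ⟨ζ, hζp, hζ1⟩

open Classical in
lemma fdeg_top_main {A B : Type*} [AddCommGroup A] [AddCommGroup B]
    {a : A} {b : B} {p q : ℕ} (hp : p.Prime) (hq : q.Prime) (hpq : p ≠ q)
    (ha : addOrderOf a = p) (hb : addOrderOf b = q) (n : ℕ) :
    ¬ (∀ r ∈ augIdeal A ^ (n + 1),
        groupRingAct r (fun x : A => if x = 0 then b else 0) = 0) := by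
  classical
  intro H
  set m := n + 1 with hm
  set f : A → B := fun x : A => if x = 0 then b else 0 with hf
  set c : ℕ → ℤ := fun k => (-1)^(m-k) * (m.choose k : ℤ) with hc
  have hppos : 0 < p := hp.pos
  have hr := H _ (pow_mem_aug a m)
  have key : ∀ x : A, ∑ k ∈ Finset.range (m+1), c k • f (x + k • a) = 0 := by
    intro x
    have h1 := congrFun hr x
    rw [single_sub_one_pow, groupRingAct_sum] at h1
    simp only [Pi.zero_apply] at h1
    refine Eq.trans ?_ h1
    refine Finset.sum_congr rfl fun k hk => ?_
    rw [groupRingAct_single]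
  -- the j-th partial binomial sum is divisible by q
  set S : ℕ → ℤ := fun j => ∑ k ∈ Finset.range (m+1), if k % p = j then c k else 0 with hS
  have hqS : ∀ j, j < p → (q : ℤ) ∣ S j := by
    intro j hj
    have h2 := key (-(j • a))
    have h3 : ∑ k ∈ Finset.range (m+1), (if k % p = j then c k • b else 0) = 0 := by
      refine Eq.trans ?_ h2
      refine (Finset.sum_congr rfl fun k hk => ?_).symm
      have : f (-(j • a) + k • a) = if k % p = j then b else 0 := by
        rw [hf]
        simp only [neg_add_eq_zero]
        congr 1
        · simp only [eq_iff_iff]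
          constructor
          · intro hkj
            exact (nsmul_eq_iff_mod ha hppos hj k).mp hkj.symm
          · intro hkj
            exact ((nsmul_eq_iff_mod ha hppos hj k).mpr hkj).symm
      rw [this, smul_ite, smul_zero]
    have h4 : S j • b = 0 := by
      rw [hS]
      simp only
      rw [Finset.sum_smul]
      rw [← h3]
      refine Finset.sum_congr rfl fun k hk => ?_
      split <;> simp
    rw [← hb]
    exact addOrderOf_dvd_iff_zsmul_eq_zero.mpr h4
  -- pass to algebraically closed field of char q
  haveI : Fact q.Prime := ⟨hq⟩
  set K := AlgebraicClosure (ZMod q) with hK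
  obtain ⟨ζ, hζp, hζ1⟩ := exists_nontrivial_root K hp hq hpq
  have hSK : ∀ j, j < p → ((S j : ℤ) : K) = 0 := fun j hj =>
    (CharP.intCast_eq_zero_iff K q (S j)).mpr (hqS j hj)
  have hζmod : ∀ k : ℕ, ζ ^ k = ζ ^ (k % p) := by
    intro k
    conv_lhs => rw [← Nat.div_add_mod k p]
    rw [pow_add, pow_mul, hζp, one_pow, one_mul]
  have expand : (ζ - 1) ^ m = ∑ k ∈ Finset.range (m+1), ((c k : ℤ) : K) * ζ ^ k := by
    rw [sub_eq_add_neg, add_pow]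
    refine Finset.sum_congr rfl fun k hk => ?_
    rw [hc]
    push_cast
    beta_reduce
    rw [Int.cast_mul, Int.cast_pow, Int.cast_neg, Int.cast_one, Int.cast_natCast]
    ring
  have zero_eq : (ζ - 1) ^ m = 0 := by
    rw [expand]
    have step1 : ∀ k ∈ Finset.range (m+1),
        ((c k : ℤ) : K) * ζ ^ k
          = ∑ j ∈ Finset.range p, if k % p = j then ((c k : ℤ) : K) * ζ ^ j else 0 := by
      intro k hk
      rw [Finset.sum_ite_eq]
      simp [Nat.mod_lt k hppos, hζmod k]
    rw [Finset.sum_congr rfl step1, Finset.sum_comm]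
    refine Finset.sum_eq_zero fun j hj => ?_
    have : ∑ k ∈ Finset.range (m+1), (if k % p = j then ((c k : ℤ) : K) * ζ ^ j else 0)
        = (∑ k ∈ Finset.range (m+1), if k % p = j then ((c k : ℤ) : K) else 0) * ζ ^ j := by
      rw [Finset.sum_mul]
      refine Finset.sum_congr rfl fun k hk => ?_
      split <;> simp
    rw [this]
    have : (∑ k ∈ Finset.range (m+1), if k % p = j then ((c k : ℤ) : K) else 0)
        = ((S j : ℤ) : K) := by
      rw [hS]
      push_cast
      beta_reduce
      rw [Int.cast_sum (R := K)]
      refine Finset.sum_congr rfl fun k hk => ?_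
      split <;> simp
    rw [this, hSK j (Finset.mem_range.mp hj), zero_mul]
  exact pow_ne_zero m (sub_ne_zero.mpr hζ1) zero_eq

lemma exists_prime_order {A : Type*} [AddCommGroup A] {x : A} {r : ℕ}
    (hpos : 0 < addOrderOf x) (hr : r.Prime) (hdvd : r ∣ addOrderOf x) :
    ∃ a : A, addOrderOf a = r := by
  set n := addOrderOf x with hn
  refine ⟨(n / r) • x, ?_⟩
  have h1 : r • (n / r) • x = 0 := by
    rw [smul_smul, Nat.mul_div_cancel' hdvd, hn]
    exact addOrderOf_nsmul_eq_zero x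
  have h2 : addOrderOf ((n / r) • x) ∣ r := addOrderOf_dvd_of_nsmul_eq_zero h1
  rcases (Nat.dvd_prime hr).mp h2 with h | h
  · exfalso
    have h3 : (n / r) • x = 0 := by
      rwa [AddMonoid.addOrderOf_eq_one_iff] at h
    have h4 : n ∣ n / r := addOrderOf_dvd_of_nsmul_eq_zero h3
    have h5 : 0 < n / r := Nat.div_pos (Nat.le_of_dvd hpos hdvd) hr.pos
    have h6 : n ≤ n / r := Nat.le_of_dvd h5 h4
    have h7 : n / r < n := Nat.div_lt_self hpos hr.one_lt
    omega
  · exact h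

end

theorem delta_finite_implies_p_groups {A B : Type*} [AddCommGroup A] [AddCommGroup B]
    [Nontrivial A] [Nontrivial B]
    (hA : ∀ x : A, ∃ n : ℕ, 0 < n ∧ n • x = 0)
    (hB : ∀ y : B, ∃ n : ℕ, 0 < n ∧ n • y = 0)
    (hfin : (⨆ f : A → B, fdeg f) < ⊤) :
    ∃ p : ℕ, p.Prime ∧ (∀ x : A, ∃ n : ℕ, p ^ n • x = 0) ∧
      (∀ y : B, ∃ n : ℕ, p ^ n • y = 0) := by
  classical
  have hAe : ∀ x : A, 0 < addOrderOf x := fun x => by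
    obtain ⟨n, hn1, hn2⟩ := hA x
    exact (isOfFinAddOrder_iff_nsmul_eq_zero.mpr ⟨n, hn1, hn2⟩).addOrderOf_pos
  have hBe : ∀ y : B, 0 < addOrderOf y := fun y => by
    obtain ⟨n, hn1, hn2⟩ := hB y
    exact (isOfFinAddOrder_iff_nsmul_eq_zero.mpr ⟨n, hn1, hn2⟩).addOrderOf_pos
  have contra : ∀ (a : A) (b : B) (p q : ℕ), p.Prime → q.Prime →
      addOrderOf a = p → addOrderOf b = q → p = q := by
    intro a b p q hp hq ha hb
    by_contra hpq
    set f : A → B := fun x => if x = 0 then b else 0 with hf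
    have hset : {N : ℕ∞ | ∃ n : ℕ, N = (n : ℕ∞) ∧
        ∀ r ∈ augIdeal A ^ (n + 1), groupRingAct r f = 0} = ∅ := by
      ext N
      simp only [Set.mem_setOf_eq, Set.mem_empty_iff_false, iff_false]
      rintro ⟨n, hN, hall⟩
      exact fdeg_top_main hp hq hpq ha hb n hall
    have htop : fdeg f = ⊤ := by
      unfold fdeg
      rw [hset]
      exact sInf_empty
    have hle := le_iSup (fun g : A → B => fdeg g) f
    rw [htop, top_le_iff] at hle
    rw [hle] at hfin
    exact lt_irrefl ⊤ hfin
  obtain ⟨x0, hx0⟩ := exists_ne (0 : A)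
  obtain ⟨y0, hy0⟩ := exists_ne (0 : B)
  have hnA : addOrderOf x0 ≠ 1 := fun h => hx0 (AddMonoid.addOrderOf_eq_one_iff.mp h)
  have hnB : addOrderOf y0 ≠ 1 := fun h => hy0 (AddMonoid.addOrderOf_eq_one_iff.mp h)
  set p := (addOrderOf x0).minFac with hpdef
  have hpprime : p.Prime := Nat.minFac_prime hnA
  obtain ⟨a0, ha0⟩ := exists_prime_order (hAe x0) hpprime (addOrderOf x0).minFac_dvd
  set q := (addOrderOf y0).minFac with hqdef
  have hqprime : q.Prime := Nat.minFac_prime hnB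
  obtain ⟨b0, hb0⟩ := exists_prime_order (hBe y0) hqprime (addOrderOf y0).minFac_dvd
  have hpq : p = q := contra a0 b0 p q hpprime hqprime ha0 hb0
  refine ⟨p, hpprime, ?_, ?_⟩
  · intro x
    have hfac : ∀ {d : ℕ}, d.Prime → d ∣ addOrderOf x → d = p := by
      intro d hd hdvd
      obtain ⟨a, haa⟩ := exists_prime_order (hAe x) hd hdvd
      exact (contra a b0 d q hd hqprime haa hb0).trans hpq.symm
    have hpow : addOrderOf x = p ^ (addOrderOf x).primeFactorsList.length :=
      Nat.eq_prime_pow_of_unique_prime_dvd (hAe x).ne' hfac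
    exact ⟨_, by rw [← hpow]; exact addOrderOf_nsmul_eq_zero x⟩
  · intro y
    have hfac : ∀ {d : ℕ}, d.Prime → d ∣ addOrderOf y → d = p := by
      intro d hd hdvd
      obtain ⟨b, hbb⟩ := exists_prime_order (hBe y) hd hdvd
      exact (contra a0 b p d hpprime hd ha0 hbb).symm
    have hpow : addOrderOf y = p ^ (addOrderOf y).primeFactorsList.length :=
      Nat.eq_prime_pow_of_unique_prime_dvd (hBe y).ne' hfac
    exact ⟨_, by rw [← hpow]; exact addOrderOf_nsmul_eq_zero y⟩
end
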